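/- Let M and N be real symmetric matrices indexed by the same finite nonempty type. Assume M has nonnegative off-diagonal entries, Nᵢᵢ ≤ Mᵢᵢ for all i, and |Nᵢⱼ| ≤ Mᵢⱼ for all i ≠ j. Then λ(N) ≤ λ(M), where λ denotes the largest eigenvalue. -/

import Mathlib

open Matrix Finset
open scoped RealInnerProductSpace

/-- The largest eigenvalue of a Hermitian matrix. -/
noncomputable def maxEig {𝕜 : Type*} [RCLike 𝕜] {n : Type*} [Fintype n] [DecidableEq n]
    {A : Matrix n n 𝕜} (hA : A.IsHermitian) : ℝ := ⨆ i, hA.eigenvalues i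

section aux

variable {n : Type*} [Fintype n] [DecidableEq n] [Nonempty n]

lemma dot_eq_inner (x y : EuclideanSpace ℝ n) :
    ⟪x, y⟫ = (x : n → ℝ) ⬝ᵥ (y : n → ℝ) := by
  simp [PiLp.inner_apply, dotProduct, mul_comm]

lemma rayleigh_le {A : Matrix n n ℝ} (hA : A.IsHermitian) (x : n → ℝ) :
    x ⬝ᵥ (A *ᵥ x) ≤ maxEig hA * (x ⬝ᵥ x) := by
  set b := hA.eigenvectorBasis
  let v : EuclideanSpace ℝ n := WithLp.toLp 2 x
  have hAv : ∀ i, ⟪b i, (WithLp.toLp 2 (A *ᵥ x) : EuclideanSpace ℝ n)⟫ = hA.eigenvalues i * ⟪b i, v⟫ := by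
    intro i
    rw [dot_eq_inner, dot_eq_inner, WithLp.ofLp_toLp]
    have h0 : (b i : n → ℝ) ⬝ᵥ (A *ᵥ x) = (A *ᵥ (b i : n → ℝ)) ⬝ᵥ x := by
      rw [dotProduct_mulVec, ← mulVec_transpose, show Aᵀ = A from hA]
    have h2 : A *ᵥ (b i : n → ℝ) = hA.eigenvalues i • (b i : n → ℝ) :=
      hA.mulVec_eigenvectorBasis i
    rw [h0, h2, smul_dotProduct]
    rfl
  have key : x ⬝ᵥ (A *ᵥ x) = ∑ i, hA.eigenvalues i * (⟪v, b i⟫ * ⟪b i, v⟫) := by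
    have := b.sum_inner_mul_inner v (WithLp.toLp 2 (A *ᵥ x) : EuclideanSpace ℝ n)
    rw [dot_eq_inner] at this
    refine this.symm.trans ?_
    refine Finset.sum_congr rfl fun i _ => ?_
    rw [hAv i]; ring
  have key2 : x ⬝ᵥ x = ∑ i, ⟪v, b i⟫ * ⟪b i, v⟫ := by
    have := b.sum_inner_mul_inner v v
    rw [dot_eq_inner] at this
    exact this.symm
  have hsq : ∀ i, 0 ≤ ⟪v, b i⟫ * ⟪b i, v⟫ := by
    intro i
    rw [real_inner_comm v (b i)]
    exact mul_self_nonneg _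
  have hle : ∀ i, hA.eigenvalues i ≤ maxEig hA := fun i =>
    le_ciSup (Set.Finite.bddAbove (Set.finite_range _)) i
  rw [key, key2, Finset.mul_sum]
  exact Finset.sum_le_sum fun i _ => mul_le_mul_of_nonneg_right (hle i) (hsq i)

lemma exists_unit_eigvec {A : Matrix n n ℝ} (hA : A.IsHermitian) :
    ∃ x : n → ℝ, x ⬝ᵥ x = 1 ∧ x ⬝ᵥ (A *ᵥ x) = maxEig hA := by
  obtain ⟨i, hi⟩ := exists_eq_ciSup_of_finite (f := hA.eigenvalues)
  have h1 : (hA.eigenvectorBasis i : n → ℝ) ⬝ᵥ (hA.eigenvectorBasis i : n → ℝ) = 1 := by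
    rw [← dot_eq_inner, real_inner_self_eq_norm_sq, hA.eigenvectorBasis.orthonormal.1 i]
    norm_num
  refine ⟨(hA.eigenvectorBasis i : n → ℝ), h1, ?_⟩
  have h2 : A *ᵥ (hA.eigenvectorBasis i : n → ℝ)
      = hA.eigenvalues i • (hA.eigenvectorBasis i : n → ℝ) :=
    hA.mulVec_eigenvectorBasis i
  rw [h2, dotProduct_smul, smul_eq_mul, h1, mul_one, hi]
  rfl

end aux

/-- **Eigenvalue domination.** If `M` is real symmetric with nonnegative off-diagonal
entries, `N` is real symmetric with `Nᵢᵢ ≤ Mᵢᵢ` and `|Nᵢⱼ| ≤ Mᵢⱼ` off the diagonal,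
then `λ(N) ≤ λ(M)`. -/
theorem maxEig_le_of_entrywise_dominated {n : Type*} [Fintype n] [DecidableEq n] [Nonempty n]
    {M N : Matrix n n ℝ} (hM : M.IsHermitian) (hN : N.IsHermitian)
    (hMoff : ∀ i j, i ≠ j → 0 ≤ M i j)
    (hdiag : ∀ i, N i i ≤ M i i)
    (hoff : ∀ i j, i ≠ j → |N i j| ≤ M i j) :
    maxEig hN ≤ maxEig hM := by
  obtain ⟨x, hx1, hx2⟩ := exists_unit_eigvec hN
  set y : n → ℝ := fun i => |x i| with hy
  have hyy : y ⬝ᵥ y = 1 := by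
    simpa [dotProduct, hy, abs_mul_abs_self] using hx1
  have step1 : x ⬝ᵥ (N *ᵥ x) ≤ y ⬝ᵥ (M *ᵥ y) := by
    simp only [dotProduct, mulVec, Finset.mul_sum]
    refine Finset.sum_le_sum fun i _ => Finset.sum_le_sum fun j _ => ?_
    rcases eq_or_ne i j with rfl | hij
    · have : x i * (N i i * x i) = N i i * (x i * x i) := by ring
      rw [this, hy]
      have : |x i| * (M i i * |x i|) = M i i * (x i * x i) := by
        rw [show |x i| * (M i i * |x i|) = M i i * (|x i| * |x i|) by ring, abs_mul_abs_self]
      rw [this]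
      exact mul_le_mul_of_nonneg_right (hdiag i) (mul_self_nonneg _)
    · calc x i * (N i j * x j) ≤ |x i * (N i j * x j)| := le_abs_self _
        _ = |x i| * (|N i j| * |x j|) := by rw [abs_mul, abs_mul]
        _ ≤ |x i| * (M i j * |x j|) :=
          mul_le_mul_of_nonneg_left
            (mul_le_mul_of_nonneg_right (hoff i j hij) (abs_nonneg _)) (abs_nonneg _)
  calc maxEig hN = x ⬝ᵥ (N *ᵥ x) := hx2.symm
    _ ≤ y ⬝ᵥ (M *ᵥ y) := step1
    _ ≤ maxEig hM * (y ⬝ᵥ y) := rayleigh_le hM y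
    _ = maxEig hM := by rw [hyy, mul_one]
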